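/- Let X be an n×p real matrix with orthonormal columns (XᵀX = I_p), p < n. Write X^{(p)} for its first p rows and X_{(p)} for its last n-p rows, and similarly for R ∈ ℝⁿ. Suppose XᵀR = 0, S is a p×p matrix with (S⁻¹ + X^{(p)})ᵀ(S⁻¹ + X^{(p)}) = I_p (S invertible), and W = R_{(p)} + X_{(p)} S R^{(p)}. Then WᵀW = RᵀR. -/

import Mathlib

open Matrix

theorem stmt_14 (p q : ℕ) (hq : 0 < q)
    (X : Matrix (Fin (p + q)) (Fin p) ℝ)
    (hX : X.transpose * X = 1)
    (R : Fin (p + q) → ℝ) (hXR : X.transpose.mulVec R = 0)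
    (S : Matrix (Fin p) (Fin p) ℝ) (hS : IsUnit S)
    (Xtop : Matrix (Fin p) (Fin p) ℝ) (hXtop : Xtop = X.submatrix (Fin.castAdd q) id)
    (Xbot : Matrix (Fin q) (Fin p) ℝ) (hXbot : Xbot = X.submatrix (Fin.natAdd p) id)
    (hOrth : (S⁻¹ + Xtop).transpose * (S⁻¹ + Xtop) = 1)
    (W : Fin q → ℝ)
    (hW : W = (fun i => R (Fin.natAdd p i)) +
      (Xbot * S).mulVec (fun j => R (Fin.castAdd q j))) :
    dotProduct W W = dotProduct R R := by
  set Rt : Fin p → ℝ := fun j => R (Fin.castAdd q j) with hRt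
  set Rb : Fin q → ℝ := fun i => R (Fin.natAdd p i) with hRb
  -- transpose-dot lemma
  have tdot : ∀ {m k : ℕ} (A : Matrix (Fin m) (Fin k) ℝ) (v : Fin k → ℝ) (w : Fin m → ℝ),
      (A.mulVec v) ⬝ᵥ w = v ⬝ᵥ (A.transpose.mulVec w) := by
    intro m k A v w
    rw [← Matrix.vecMul_transpose, Matrix.dotProduct_mulVec]
  have h1 : Xtop.transpose * Xtop + Xbot.transpose * Xbot = 1 := by
    ext i j
    have := congrFun (congrFun hX i) j
    simp [Matrix.mul_apply, Matrix.transpose_apply, hXtop, hXbot] at this ⊢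
    rw [← this, Fin.sum_univ_add]
  have h2 : Xbot.transpose.mulVec Rb = -(Xtop.transpose.mulVec Rt) := by
    ext i
    have := congrFun hXR i
    simp [Matrix.mulVec, dotProduct, Matrix.transpose_apply, hXtop, hXbot, hRt, hRb] at this ⊢
    rw [Fin.sum_univ_add] at this
    linarith
  have hSinv : S⁻¹ * S = 1 := Matrix.nonsing_inv_mul S ((Matrix.isUnit_iff_isUnit_det S).mp hS)
  have hSinvT : S.transpose * S⁻¹.transpose = 1 := by
    rw [← Matrix.transpose_mul, hSinv, Matrix.transpose_one]
  have h3 : S.transpose * S =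
      1 + Xtop * S + S.transpose * Xtop.transpose + S.transpose * (Xtop.transpose * Xtop) * S := by
    have e := congrArg (fun M => S.transpose * M * S) hOrth
    simp only [Matrix.transpose_add, Matrix.add_mul, Matrix.mul_add, Matrix.mul_one,
      Matrix.one_mul] at e
    rw [show S.transpose * (S⁻¹.transpose * S⁻¹) * S
        = (S.transpose * S⁻¹.transpose) * (S⁻¹ * S) by noncomm_ring,
      hSinv, hSinvT, Matrix.one_mul] at e
    rw [show S.transpose * (S⁻¹.transpose * Xtop) * S = (S.transpose * S⁻¹.transpose) * (Xtop * S) by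
        noncomm_ring, hSinvT, Matrix.one_mul] at e
    rw [show S.transpose * (Xtop.transpose * S⁻¹) * S
        = (S.transpose * Xtop.transpose) * (S⁻¹ * S) by noncomm_ring,
      hSinv, Matrix.mul_one] at e
    rw [show S.transpose * (Xtop.transpose * Xtop) * S = S.transpose * (Xtop.transpose * Xtop * S) by
        noncomm_ring] at e
    rw [← e]; noncomm_ring
  have hM : (Xbot * S).transpose * (Xbot * S) = 1 + Xtop * S + S.transpose * Xtop.transpose := by
    have hbb : Xbot.transpose * Xbot = 1 - Xtop.transpose * Xtop := by
      linear_combination (norm := noncomm_ring) h1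
    rw [Matrix.transpose_mul]
    calc S.transpose * Xbot.transpose * (Xbot * S)
        = S.transpose * (Xbot.transpose * Xbot) * S := by
          simp only [Matrix.mul_assoc]
      _ = S.transpose * S - S.transpose * (Xtop.transpose * Xtop) * S := by
          rw [hbb]; noncomm_ring
      _ = 1 + Xtop * S + S.transpose * Xtop.transpose := by
          rw [h3]; noncomm_ring
  have hRR : R ⬝ᵥ R = Rt ⬝ᵥ Rt + Rb ⬝ᵥ Rb := by
    simp only [dotProduct, hRt, hRb]
    rw [Fin.sum_univ_add]
  subst hW
  rw [hRR]
  have e1 : ((Xbot * S).mulVec Rt) ⬝ᵥ Rb = -(Rt ⬝ᵥ (S.transpose * Xtop.transpose).mulVec Rt) := by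
    rw [tdot, Matrix.transpose_mul, ← Matrix.mulVec_mulVec, h2]
    rw [← Matrix.mulVec_mulVec]
    simp [Matrix.mulVec_neg, dotProduct_neg]
  have e2 : ((Xbot * S).mulVec Rt) ⬝ᵥ ((Xbot * S).mulVec Rt)
      = Rt ⬝ᵥ Rt + Rt ⬝ᵥ ((Xtop * S).mulVec Rt) + Rt ⬝ᵥ ((S.transpose * Xtop.transpose).mulVec Rt) := by
    rw [tdot, Matrix.mulVec_mulVec, hM]
    simp [Matrix.add_mulVec, dotProduct_add, Matrix.one_mulVec]
  have e3 : Rt ⬝ᵥ ((Xtop * S).mulVec Rt) = Rt ⬝ᵥ ((S.transpose * Xtop.transpose).mulVec Rt) := by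
    rw [dotProduct_comm, tdot, Matrix.transpose_mul]
  rw [add_dotProduct, dotProduct_add, dotProduct_add]
  rw [dotProduct_comm Rb ((Xbot * S).mulVec Rt)] 
  rw [e1, e2, e3]
  ring
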